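/- Let G = (V,E) be a D-regular graph on n vertices, k > 0, and let φ be the edge-indicator embedding satisfying ⟨φ(i,v),φ(i',v')⟩ = 1[(v,v') ∈ E] for i ≠ i' and ‖φ(i,v)‖₂² = D(k-1). For any vertices j_1, …, j_k (not necessarily distinct), min over y ∈ R^d of ∑_{i=1}^k ‖φ(i,j_i) - y‖₂² equals D(k-1)² - (2/k)·|E(j_1,…,j_k)|, where |E(j_1,…,j_k)| = ∑_{i < i'} 1[(j_i, j_{i'}) ∈ E] counts edges of the induced multiset with multiplicity. -/

import Mathlib

open Finset

/-- Index set for the coordinates of the edge-indicator embedding: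
    tuples (ℓ, u, ℓ', u') with ℓ < ℓ' in [k] and u, u' vertices. -/
abbrev EmbIdx (k : ℕ) (V : Type*) := {σ : Fin k × V × Fin k × V // σ.1 < σ.2.2.1}

/-- The edge-indicator embedding φ : [k] × V → {0,1}^d of a graph G, with
    [φ(i,v)]_{(ℓ,u,ℓ',u')} = 1 iff (u,u') ∈ E and ((ℓ,u) = (i,v) or (ℓ',u') = (i,v)). -/
def Emb {V : Type*} (G : SimpleGraph V) [DecidableRel G.Adj] [DecidableEq V]
    (k : ℕ) (i : Fin k) (v : V) : EmbIdx k V → ℝ :=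
  fun σ =>
    if G.Adj σ.1.2.1 σ.1.2.2.2 ∧
        ((σ.1.1, σ.1.2.1) = (i, v) ∨ (σ.1.2.2.1, σ.1.2.2.2) = (i, v)) then 1 else 0

lemma key_pt (k : ℕ) (a : Fin k → ℝ) (t : ℝ) :
    ∑ i, (a i - t)^2 = ∑ i, (a i)^2 - 2*t*(∑ i, a i) + k*t^2 := by
  have h : ∀ i : Fin k, (a i - t)^2 = (a i)^2 - 2*t*(a i) + t^2 := fun i => by ring
  simp only [h, Finset.sum_add_distrib, Finset.sum_sub_distrib, ← Finset.mul_sum,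
    Finset.sum_const, Finset.card_univ, Fintype.card_fin, nsmul_eq_mul]

lemma key_min {k : ℕ} (hk : 0 < k) (a : Fin k → ℝ) (t : ℝ) :
    ∑ i, (a i)^2 - (∑ i, a i)^2 / k ≤ ∑ i, (a i - t)^2 := by
  rw [key_pt]
  have hk' : (0:ℝ) < k := by exact_mod_cast hk
  have h : (∑ i, (a i)^2 - 2*t*(∑ i, a i) + k*t^2) - (∑ i, (a i)^2 - (∑ i, a i)^2 / k)
      = ((k:ℝ)*t - ∑ i, a i)^2 / k := by field_simp; ring
  linarith [h, div_nonneg (sq_nonneg ((k:ℝ)*t - ∑ i, a i)) hk'.le]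

lemma key_eq {k : ℕ} (hk : 0 < k) (a : Fin k → ℝ) :
    ∑ i, (a i - (∑ i, a i)/k)^2 = ∑ i, (a i)^2 - (∑ i, a i)^2 / k := by
  rw [key_pt]
  have hk' : (k:ℝ) ≠ 0 := by positivity
  field_simp
  ring

lemma boole_split (C C1 C2 : Prop) [Decidable C] [Decidable C1] [Decidable C2]
    (hiff : C ↔ C1 ∨ C2) (hdisj : ¬(C1 ∧ C2)) :
    (if C then (1:ℝ) else 0) = (if C1 then 1 else 0) + (if C2 then 1 else 0) := by
  split_ifs <;> (try norm_num) <;> tauto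

lemma sum_embIdx {V : Type*} [Fintype V] [DecidableEq V] (k : ℕ)
    (F : (Fin k × V × Fin k × V) → ℝ) :
    ∑ σ : EmbIdx k V, F σ.1 = ∑ t : Fin k × V × Fin k × V, if t.1 < t.2.2.1 then F t else 0 := by
  rw [← Finset.sum_filter]
  exact (Finset.sum_subtype _ (by simp) F).symm

lemma hIoi {k : ℕ} (i : Fin k) :
    ∑ l : Fin k, (if i < l then (1:ℝ) else 0) = ((k - 1 - (i:ℕ) : ℕ) : ℝ) := by
  rw [Finset.sum_boole]
  norm_cast
  have h : Finset.univ.filter (fun l => i < l) = Finset.Ioi i := by ext l; simp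
  rw [h, Fin.card_Ioi]

lemma hIio {k : ℕ} (i : Fin k) :
    ∑ l : Fin k, (if l < i then (1:ℝ) else 0) = ((i:ℕ) : ℝ) := by
  rw [Finset.sum_boole]
  norm_cast
  have h : Finset.univ.filter (fun l => l < i) = Finset.Iio i := by ext l; simp
  rw [h, Fin.card_Iio]

section Graph
variable {V : Type*} [Fintype V] [DecidableEq V] (G : SimpleGraph V) [DecidableRel G.Adj]

omit [DecidableEq V] in
lemma hdeg {D : ℕ} (hreg : G.IsRegularOfDegree D) (w : V) :
    ∑ u : V, (if G.Adj w u then (1:ℝ) else 0) = D := by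
  rw [Finset.sum_boole]; norm_cast
  rw [← SimpleGraph.neighborFinset_eq_filter]; exact hreg w

lemma gram_diag {D k : ℕ} (hreg : G.IsRegularOfDegree D) (i : Fin k) (v : V) :
    ∑ σ : EmbIdx k V, Emb G k i v σ * Emb G k i v σ = ((k - 1 : ℕ) : ℝ) * D := by
  have step1 : ∀ σ : EmbIdx k V, Emb G k i v σ * Emb G k i v σ
      = (fun t : Fin k × V × Fin k × V =>
          if G.Adj t.2.1 t.2.2.2 ∧ ((t.1, t.2.1) = (i,v) ∨ (t.2.2.1, t.2.2.2) = (i,v))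
          then (1:ℝ) else 0) σ.1 := by
    intro σ; simp only [Emb]; split_ifs <;> norm_num
  rw [Finset.sum_congr rfl (fun σ _ => step1 σ),
    sum_embIdx k (fun t => if G.Adj t.2.1 t.2.2.2 ∧
      ((t.1, t.2.1) = (i,v) ∨ (t.2.2.1, t.2.2.2) = (i,v)) then (1:ℝ) else 0)]
  have hpt : ∀ t : Fin k × V × Fin k × V,
      (if t.1 < t.2.2.1 then
        (if G.Adj t.2.1 t.2.2.2 ∧ ((t.1, t.2.1) = (i,v) ∨ (t.2.2.1, t.2.2.2) = (i,v))
          then (1:ℝ) else 0) else 0)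
      = (if t.1 = i ∧ t.2.1 = v ∧ i < t.2.2.1 ∧ G.Adj v t.2.2.2 then 1 else 0)
        + (if t.2.2.1 = i ∧ t.2.2.2 = v ∧ t.1 < i ∧ G.Adj t.2.1 v then 1 else 0) := by
    rintro ⟨l, u, l', u'⟩
    rw [← ite_and]
    apply boole_split
    · simp only [Prod.mk.injEq]
      constructor
      · rintro ⟨hlt, hadj, ⟨rfl, rfl⟩ | ⟨rfl, rfl⟩⟩
        · exact Or.inl ⟨rfl, rfl, hlt, hadj⟩
        · exact Or.inr ⟨rfl, rfl, hlt, hadj⟩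
      · rintro (⟨rfl, rfl, hlt, hadj⟩ | ⟨rfl, rfl, hlt, hadj⟩)
        · exact ⟨hlt, hadj, Or.inl ⟨rfl, rfl⟩⟩
        · exact ⟨hlt, hadj, Or.inr ⟨rfl, rfl⟩⟩
    · rintro ⟨⟨rfl, rfl, hlt, -⟩, ⟨h, -, hlt', -⟩⟩
      exact absurd (h ▸ hlt) (lt_irrefl _)
  rw [Finset.sum_congr rfl (fun t _ => hpt t), Finset.sum_add_distrib]
  have hmul : ∀ (p : Prop) [Decidable p] (c : ℝ),
      (if p then c else 0) = (if p then (1:ℝ) else 0) * c := by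
    intro p _ c; split_ifs <;> ring
  have h1 : ∑ t : Fin k × V × Fin k × V,
      (if t.1 = i ∧ t.2.1 = v ∧ i < t.2.2.1 ∧ G.Adj v t.2.2.2 then (1:ℝ) else 0)
      = ((k - 1 - (i:ℕ) : ℕ) : ℝ) * D := by
    simp only [Fintype.sum_prod_type, ite_and, Finset.sum_ite_irrel, Finset.sum_ite_eq',
      Finset.mem_univ, if_true, Finset.sum_const_zero]
    simp only [hdeg G hreg v]
    simp only [hmul _ (D:ℝ), ← Finset.sum_mul, hIoi]
  have h2 : ∑ t : Fin k × V × Fin k × V,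
      (if t.2.2.1 = i ∧ t.2.2.2 = v ∧ t.1 < i ∧ G.Adj t.2.1 v then (1:ℝ) else 0)
      = ((i:ℕ) : ℝ) * D := by
    simp only [Fintype.sum_prod_type, ite_and, Finset.sum_ite_irrel, Finset.sum_ite_eq',
      Finset.mem_univ, if_true, Finset.sum_const_zero]
    have hc : ∀ x1 : V, G.Adj x1 v ↔ G.Adj v x1 := fun x1 => G.adj_comm x1 v
    simp only [hc, hdeg G hreg v]
    simp only [hmul _ (D:ℝ), ← Finset.sum_mul, hIio]
  rw [h1, h2]
  have hle : (i:ℕ) ≤ k - 1 := by have := i.is_lt; omega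
  have h3 : ((k - 1 - (i:ℕ) : ℕ):ℝ) = ((k-1:ℕ):ℝ) - ((i:ℕ):ℝ) := by
    rw [Nat.cast_sub hle]
  rw [h3]; ring

end Graph

section Graph2
variable {V : Type*} [Fintype V] [DecidableEq V] (G : SimpleGraph V) [DecidableRel G.Adj]

lemma indic_mul (p q : Prop) [Decidable p] [Decidable q] :
    (if p then (1:ℝ) else 0) * (if q then 1 else 0) = if p ∧ q then 1 else 0 := by
  split_ifs <;> (try norm_num) <;> tauto

lemma gram_cross_lt {k : ℕ} {i i' : Fin k} (hii : i < i') (v v' : V) :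
    ∑ σ : EmbIdx k V, Emb G k i v σ * Emb G k i' v' σ
      = if G.Adj v v' then (1:ℝ) else 0 := by
  have step1 : ∀ σ : EmbIdx k V, Emb G k i v σ * Emb G k i' v' σ
      = (fun t : Fin k × V × Fin k × V =>
          if (G.Adj t.2.1 t.2.2.2 ∧ ((t.1, t.2.1) = (i,v) ∨ (t.2.2.1, t.2.2.2) = (i,v))) ∧
             (G.Adj t.2.1 t.2.2.2 ∧ ((t.1, t.2.1) = (i',v') ∨ (t.2.2.1, t.2.2.2) = (i',v')))
          then (1:ℝ) else 0) σ.1 := by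
    intro σ; simp only [Emb]; rw [indic_mul]
  rw [Finset.sum_congr rfl (fun σ _ => step1 σ),
    sum_embIdx k (fun t =>
      if (G.Adj t.2.1 t.2.2.2 ∧ ((t.1, t.2.1) = (i,v) ∨ (t.2.2.1, t.2.2.2) = (i,v))) ∧
         (G.Adj t.2.1 t.2.2.2 ∧ ((t.1, t.2.1) = (i',v') ∨ (t.2.2.1, t.2.2.2) = (i',v')))
      then (1:ℝ) else 0)]
  have hpt : ∀ t : Fin k × V × Fin k × V,
      (if t.1 < t.2.2.1 then
        (if (G.Adj t.2.1 t.2.2.2 ∧ ((t.1, t.2.1) = (i,v) ∨ (t.2.2.1, t.2.2.2) = (i,v))) ∧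
            (G.Adj t.2.1 t.2.2.2 ∧ ((t.1, t.2.1) = (i',v') ∨ (t.2.2.1, t.2.2.2) = (i',v')))
          then (1:ℝ) else 0) else 0)
      = (if t.1 = i ∧ t.2.1 = v ∧ t.2.2.1 = i' ∧ t.2.2.2 = v' ∧ G.Adj v v' then 1 else 0) := by
    rintro ⟨l, u, l', u'⟩
    rw [← ite_and]
    apply if_congr _ rfl rfl
    simp only [Prod.mk.injEq]
    constructor
    · rintro ⟨hlt, ⟨hadj, ⟨rfl, rfl⟩ | ⟨rfl, rfl⟩⟩, ⟨-, hB | hB⟩⟩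
      · exact absurd hB.1 (ne_of_lt hii)
      · obtain ⟨rfl, rfl⟩ := hB; exact ⟨rfl, rfl, rfl, rfl, hadj⟩
      · obtain ⟨rfl, rfl⟩ := hB; exact absurd (hlt.trans hii) (lt_irrefl _)
      · exact absurd hB.1 (ne_of_lt hii)
    · rintro ⟨rfl, rfl, rfl, rfl, hadj⟩
      exact ⟨hii, ⟨hadj, Or.inl ⟨rfl, rfl⟩⟩, ⟨hadj, Or.inr ⟨rfl, rfl⟩⟩⟩
  rw [Finset.sum_congr rfl (fun t _ => hpt t)]
  simp only [Fintype.sum_prod_type, ite_and, Finset.sum_ite_irrel, Finset.sum_ite_eq',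
    Finset.mem_univ, if_true, Finset.sum_const_zero]

lemma gram_cross {k : ℕ} {i i' : Fin k} (hii : i ≠ i') (v v' : V) :
    ∑ σ : EmbIdx k V, Emb G k i v σ * Emb G k i' v' σ
      = if G.Adj v v' then (1:ℝ) else 0 := by
  rcases lt_or_gt_of_ne hii with h | h
  · exact gram_cross_lt G h v v'
  · rw [Finset.sum_congr rfl (fun σ _ => mul_comm (Emb G k i v σ) (Emb G k i' v' σ)),
      gram_cross_lt G h v' v]
    exact if_congr (G.adj_comm v' v) rfl rfl

end Graph2

theorem stmt7 {V : Type*} [Fintype V] [DecidableEq V] (G : SimpleGraph V)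
    [DecidableRel G.Adj] (n D k : ℕ) (hn : Fintype.card V = n)
    (hreg : G.IsRegularOfDegree D) (hk : 0 < k) (j : Fin k → V) :
    IsLeast
      {c : ℝ | ∃ y : EmbIdx k V → ℝ,
        c = ∑ i, ∑ σ : EmbIdx k V, (Emb G k i (j i) σ - y σ) ^ 2}
      ((D : ℝ) * ((k : ℝ) - 1) ^ 2
        - (2 / (k : ℝ)) *
          ∑ pr ∈ Finset.univ.filter (fun pr : Fin k × Fin k => pr.1 < pr.2),
            (if G.Adj (j pr.1) (j pr.2) then (1 : ℝ) else 0)) := by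
  classical
  set S : ℝ := ∑ pr ∈ Finset.univ.filter (fun pr : Fin k × Fin k => pr.1 < pr.2),
      (if G.Adj (j pr.1) (j pr.2) then (1:ℝ) else 0) with hS
  set dd : ℝ := ((k - 1 : ℕ) : ℝ) * D with hdd
  have hkR : (k:ℝ) ≠ 0 := Nat.cast_ne_zero.mpr hk.ne'
  have hcast : ((k - 1 : ℕ) : ℝ) = (k:ℝ) - 1 := by
    rw [Nat.cast_sub hk]; simp
  have hdiag : ∀ i : Fin k,
      ∑ σ : EmbIdx k V, Emb G k i (j i) σ * Emb G k i (j i) σ = dd :=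
    fun i => gram_diag G hreg i (j i)
  have hco : ∀ i i' : Fin k, ∑ σ : EmbIdx k V, Emb G k i (j i) σ * Emb G k i' (j i') σ
      = (if G.Adj (j i) (j i') then (1:ℝ) else 0) + (if i = i' then dd else 0) := by
    intro i i'
    by_cases h : i = i'
    · subst h; simp [hdiag i, G.irrefl]
    · simp [h, gram_cross G h (j i) (j i')]
  have hA : ∑ σ : EmbIdx k V, ∑ i, (Emb G k i (j i) σ)^2 = k * dd := by
    rw [Finset.sum_comm]
    have h : ∀ i : Fin k, ∑ σ : EmbIdx k V, (Emb G k i (j i) σ)^2 = dd := by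
      intro i; simpa [sq] using hdiag i
    rw [Finset.sum_congr rfl (fun i _ => h i), Finset.sum_const, Finset.card_univ,
      Fintype.card_fin, nsmul_eq_mul]
  have hT : ∑ i : Fin k, ∑ i' : Fin k,
      (if G.Adj (j i) (j i') then (1:ℝ) else 0) = 2 * S := by
    have hpp : ∑ i : Fin k, ∑ i' : Fin k, (if G.Adj (j i) (j i') then (1:ℝ) else 0)
        = ∑ p : Fin k × Fin k, (if G.Adj (j p.1) (j p.2) then (1:ℝ) else 0) :=
      (Fintype.sum_prod_type
        (fun p : Fin k × Fin k => if G.Adj (j p.1) (j p.2) then (1:ℝ) else 0)).symm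
    rw [hpp]
    rw [← Finset.sum_filter_add_sum_filter_not Finset.univ
      (fun p : Fin k × Fin k => p.1 < p.2)
      (fun p => if G.Adj (j p.1) (j p.2) then (1:ℝ) else 0)]
    have h1 : ∑ p ∈ Finset.univ.filter (fun p : Fin k × Fin k => ¬ p.1 < p.2),
        (if G.Adj (j p.1) (j p.2) then (1:ℝ) else 0)
        = ∑ p ∈ Finset.univ.filter (fun p : Fin k × Fin k => p.2 < p.1),
        (if G.Adj (j p.1) (j p.2) then (1:ℝ) else 0) := by
      refine (Finset.sum_subset ?_ ?_).symm
      · intro p hp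
        simp only [Finset.mem_filter, Finset.mem_univ, true_and] at hp ⊢
        exact not_lt_of_gt hp
      · intro p hp hnp
        simp only [Finset.mem_filter, Finset.mem_univ, true_and] at hp hnp
        have : p.1 = p.2 := le_antisymm (not_lt.mp hnp) (not_lt.mp hp)
        simp [this, G.irrefl]
    have h2 : ∑ p ∈ Finset.univ.filter (fun p : Fin k × Fin k => p.2 < p.1),
        (if G.Adj (j p.1) (j p.2) then (1:ℝ) else 0) = S := by
      rw [hS]
      refine Finset.sum_equiv (Equiv.prodComm (Fin k) (Fin k)) ?_ ?_
      · intro p; simp [Equiv.prodComm]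
      · intro p hp
        exact if_congr (G.adj_comm (j p.1) (j p.2)) rfl rfl
    rw [h1, h2]; ring
  have hB : ∑ σ : EmbIdx k V, (∑ i, Emb G k i (j i) σ)^2 = 2*S + k*dd := by
    have expand : ∀ σ : EmbIdx k V, (∑ i, Emb G k i (j i) σ)^2
        = ∑ i, ∑ i', Emb G k i (j i) σ * Emb G k i' (j i') σ := by
      intro σ; rw [sq, Finset.sum_mul_sum]
    rw [Finset.sum_congr rfl (fun σ _ => expand σ), Finset.sum_comm]
    rw [Finset.sum_congr rfl (fun i _ => Finset.sum_comm)]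
    rw [Finset.sum_congr rfl (fun i (_ : i ∈ Finset.univ) =>
      Finset.sum_congr rfl (fun i' _ => hco i i'))]
    rw [Finset.sum_congr rfl (fun i (_ : i ∈ Finset.univ) => Finset.sum_add_distrib),
      Finset.sum_add_distrib, hT]
    have hdsum : ∑ i : Fin k, ∑ i' : Fin k, (if i = i' then dd else 0) = k * dd := by
      simp [Finset.sum_ite_eq, Finset.card_univ]
    rw [hdsum]
  have hL : (D:ℝ)*((k:ℝ)-1)^2 - (2/(k:ℝ))*S
      = ∑ σ : EmbIdx k V, (∑ i, (Emb G k i (j i) σ)^2 - (∑ i, Emb G k i (j i) σ)^2/(k:ℝ)) := by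
    rw [Finset.sum_sub_distrib, ← Finset.sum_div, hA, hB, hdd, hcast]
    field_simp
    ring
  constructor
  · refine ⟨fun σ => (∑ i, Emb G k i (j i) σ)/(k:ℝ), ?_⟩
    rw [Finset.sum_comm, hL]
    exact (Finset.sum_congr rfl (fun σ _ => key_eq hk (fun i => Emb G k i (j i) σ))).symm
  · rintro c ⟨y, rfl⟩
    rw [Finset.sum_comm, hL]
    exact Finset.sum_le_sum (fun σ _ => key_min hk (fun i => Emb G k i (j i) σ) (y σ))
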